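/- arXiv:2101.08383 — 2 statements merged into one kernel-verified Lean document; each statement's English description precedes it below -/
import Mathlib

section
/- Let G be the H-join of graphs G_1,…,G_p. If μ is a non-main eigenvalue of G_i with multiplicity m, then μ is an eigenvalue of G with multiplicity at least m; if μ is a main eigenvalue of G_i with multiplicity m, then μ is an eigenvalue of G with multiplicity at least m − 1. -/
open Matrix

/-- The `H`-join of the family of graphs `G i`. -/
def SimpleGraph.hJoin {p : ℕ} (H : SimpleGraph (Fin p)) (n : Fin p → ℕ)
    (G : ∀ i, SimpleGraph (Fin (n i))) : SimpleGraph ((i : Fin p) × Fin (n i)) where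
  Adj x y := if h : x.1 = y.1 then (G x.1).Adj x.2 (Fin.cast (congrArg n h.symm) y.2)
             else H.Adj x.1 y.1
  symm := by
    constructor
    rintro ⟨i, a⟩ ⟨k, b⟩ hadj
    dsimp at *
    by_cases h : i = k
    · subst h
      rw [dif_pos rfl] at hadj ⊢
      simpa using ((G i).symm.symm _ _ (by simpa using hadj))
    · rw [dif_neg h] at hadj
      rw [dif_neg (Ne.symm h)]
      exact H.symm.symm _ _ hadj
  loopless := by
    constructor
    rintro ⟨i, a⟩ h
    rw [dif_pos rfl] at h
    simp at h

noncomputable instance {p : ℕ} (H : SimpleGraph (Fin p)) (n : Fin p → ℕ)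
    (G : ∀ i, SimpleGraph (Fin (n i))) : DecidableRel (H.hJoin n G).Adj :=
  Classical.decRel _

/-- `μ` is a main eigenvalue of the matrix `A`. -/
def Matrix.IsMainEig {m : ℕ} (A : Matrix (Fin m) (Fin m) ℝ) (μ : ℝ) : Prop :=
  ∃ v : Fin m → ℝ, A *ᵥ v = μ • v ∧ v ⬝ᵥ (fun _ => (1 : ℝ)) ≠ 0

section Aux

variable {p : ℕ} (H : SimpleGraph (Fin p)) (n : Fin p → ℕ)
    (G : ∀ i, SimpleGraph (Fin (n i))) [∀ i, DecidableRel (G i).Adj] (i : Fin p)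

/-- Extend a vector on block `i` by zero. -/
def extMap : (Fin (n i) → ℝ) →ₗ[ℝ] (((j : Fin p) × Fin (n j)) → ℝ) where
  toFun v x := if h : x.1 = i then v (Fin.cast (congrArg n h) x.2) else 0
  map_add' u v := by funext x; by_cases h : x.1 = i <;> simp [h]
  map_smul' c v := by funext x; by_cases h : x.1 = i <;> simp [h]

lemma extMap_apply_self (v : Fin (n i) → ℝ) (a : Fin (n i)) :
    extMap n i v ⟨i, a⟩ = v a := by
  simp [extMap]

lemma extMap_injective : Function.Injective (extMap n i) := by
  intro u v h
  funext a
  have := congrFun h ⟨i, a⟩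
  simpa [extMap] using this

lemma ext_eigen (μ : ℝ) (v : Fin (n i) → ℝ)
    (hv : ((G i).adjMatrix ℝ) *ᵥ v = μ • v) (hsum : ∑ a, v a = 0) :
    ((H.hJoin n G).adjMatrix ℝ) *ᵥ (extMap n i v) = μ • extMap n i v := by
  funext x
  obtain ⟨j, b⟩ := x
  have key : (((H.hJoin n G).adjMatrix ℝ) *ᵥ (extMap n i v)) ⟨j, b⟩
      = ∑ k : Fin p, ∑ c : Fin (n k),
          (if (H.hJoin n G).Adj ⟨j, b⟩ ⟨k, c⟩ then (1:ℝ) else 0) * extMap n i v ⟨k, c⟩ := by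
    rw [mulVec, dotProduct, ← Finset.univ_sigma_univ, Finset.sum_sigma]
    simp [SimpleGraph.adjMatrix_apply]
  rw [key]
  have hzero : ∀ k : Fin p, k ≠ i → ∀ c : Fin (n k),
      (if (H.hJoin n G).Adj ⟨j, b⟩ ⟨k, c⟩ then (1:ℝ) else 0) * extMap n i v ⟨k, c⟩ = 0 := by
    intro k hk c
    have : extMap n i v ⟨k, c⟩ = 0 := by simp [extMap, hk]
    simp [this]
  rw [Finset.sum_eq_single i (fun k _ hk => by
    rw [Finset.sum_eq_zero (fun c _ => hzero k hk c)]) (fun h => absurd (Finset.mem_univ i) h)]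
  by_cases hj : j = i
  · subst hj
    have hadj : ∀ c : Fin (n j), (H.hJoin n G).Adj ⟨j, b⟩ ⟨j, c⟩ ↔ (G j).Adj b c := by
      intro c
      simp [SimpleGraph.hJoin]
    have : ∑ c : Fin (n j),
        (if (H.hJoin n G).Adj ⟨j, b⟩ ⟨j, c⟩ then (1:ℝ) else 0) * extMap n j v ⟨j, c⟩
        = (((G j).adjMatrix ℝ) *ᵥ v) b := by
      rw [mulVec, dotProduct]
      refine Finset.sum_congr rfl fun c _ => ?_
      rw [extMap_apply_self]
      simp [hadj c]
    rw [this, hv]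
    simp [extMap_apply_self]
  · classical
    have hadj : ∀ c : Fin (n i), ((H.hJoin n G).Adj ⟨j, b⟩ ⟨i, c⟩ ↔ H.Adj j i) := by
      intro c
      simp [SimpleGraph.hJoin, hj]
    have hext : extMap n i v ⟨j, b⟩ = 0 := by simp [extMap, hj]
    have : ∑ c : Fin (n i),
        (if (H.hJoin n G).Adj ⟨j, b⟩ ⟨i, c⟩ then (1:ℝ) else 0) * extMap n i v ⟨i, c⟩
        = (if H.Adj j i then (1:ℝ) else 0) * ∑ c, v c := by
      rw [Finset.mul_sum]
      refine Finset.sum_congr rfl fun c _ => ?_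
      rw [extMap_apply_self]
      congr 1
      exact if_congr (hadj c) rfl rfl
    rw [this, hsum]
    simp [hext]

/-- the sum functional -/
def sumF : (Fin (n i) → ℝ) →ₗ[ℝ] ℝ where
  toFun v := ∑ a, v a
  map_add' u v := by simp [Finset.sum_add_distrib]
  map_smul' c v := by simp [Finset.mul_sum]

end Aux

/-- In the `H`-join `G` of `G_1, …, G_p`: a non-main eigenvalue of `G_i` of
multiplicity `m` is an eigenvalue of `G` of multiplicity at least `m`, and a main
eigenvalue of `G_i` of multiplicity `m` is an eigenvalue of `G` of multiplicity at
least `m - 1`. -/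
theorem hJoin_eigenvalue_multiplicity {p : ℕ} (H : SimpleGraph (Fin p))
    (n : Fin p → ℕ) (G : ∀ i, SimpleGraph (Fin (n i))) [∀ i, DecidableRel (G i).Adj]
    (i : Fin p) (μ : ℝ) (m : ℕ)
    (hm : m = Module.finrank ℝ
      (Module.End.eigenspace (Matrix.mulVecLin ((G i).adjMatrix ℝ)) μ)) :
    (¬ ((G i).adjMatrix ℝ).IsMainEig μ →
        m ≤ Module.finrank ℝ
          (Module.End.eigenspace (Matrix.mulVecLin ((H.hJoin n G).adjMatrix ℝ)) μ)) ∧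
    (((G i).adjMatrix ℝ).IsMainEig μ →
        m - 1 ≤ Module.finrank ℝ
          (Module.End.eigenspace (Matrix.mulVecLin ((H.hJoin n G).adjMatrix ℝ)) μ)) := by
  set E := Module.End.eigenspace (Matrix.mulVecLin ((G i).adjMatrix ℝ)) μ with hE
  set E' := Module.End.eigenspace (Matrix.mulVecLin ((H.hJoin n G).adjMatrix ℝ)) μ with hE'
  set f := sumF n i with hf
  set W := E ⊓ LinearMap.ker f with hW
  -- W maps into E'
  have hmap : W.map (extMap n i) ≤ E' := by
    rintro _ ⟨v, ⟨hvE, hvK⟩, rfl⟩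
    rw [hE', Module.End.mem_eigenspace_iff, Matrix.mulVecLin_apply]
    have hvE' : ((G i).adjMatrix ℝ) *ᵥ v = μ • v := by
      have h := Module.End.mem_eigenspace_iff.mp hvE
      rwa [Matrix.mulVecLin_apply] at h
    have hsum : ∑ a, v a = 0 := hvK
    exact ext_eigen H n G i μ v hvE' hsum
  have hWle : Module.finrank ℝ ↥W ≤ Module.finrank ℝ ↥E' := by
    have h1 : Module.finrank ℝ ↥(W.map (extMap n i)) = Module.finrank ℝ ↥W :=
      (LinearEquiv.finrank_eq (Submodule.equivMapOfInjective _ (extMap_injective n i) W)).symm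
    rw [← h1]
    exact Submodule.finrank_mono hmap
  constructor
  · intro hnm
    have hEW : E ≤ LinearMap.ker f := by
      intro v hv
      rw [hE, Module.End.mem_eigenspace_iff, Matrix.mulVecLin_apply] at hv
      by_contra hne
      exact hnm ⟨v, hv, by
        simpa [dotProduct, sumF, hf] using hne⟩
    have : W = E := by rw [hW, inf_eq_left.mpr hEW]
    rw [hm, ← this]
    exact hWle
  · intro _
    have h2 : Module.finrank ℝ ↥(E ⊔ LinearMap.ker f) + Module.finrank ℝ ↥W
        = Module.finrank ℝ ↥E + Module.finrank ℝ ↥(LinearMap.ker f) :=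
      Submodule.finrank_sup_add_finrank_inf_eq E (LinearMap.ker f)
    have h3 : Module.finrank ℝ ↥(LinearMap.ker f) + Module.finrank ℝ ↥(LinearMap.range f)
        = n i := by
      rw [add_comm, LinearMap.finrank_range_add_finrank_ker]
      simp
    have h4 : Module.finrank ℝ ↥(LinearMap.range f) ≤ 1 := by
      simpa using Submodule.finrank_le (LinearMap.range f)
    have h5 : Module.finrank ℝ ↥(E ⊔ LinearMap.ker f) ≤ n i := by
      have := Submodule.finrank_le (E ⊔ LinearMap.ker f)
      simpa using this
    have hWge : Module.finrank ℝ ↥E - 1 ≤ Module.finrank ℝ ↥W := by omega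
    rw [hm]
    exact le_trans hWge (le_trans (by omega) hWle)
end

section
/- Let G be the H-join of arbitrary graphs G_1,…,G_p and let W̃ be the H-join associated matrix of size s = s_1 + ⋯ + s_p, built from the Frobenius companion matrices C(m_{G_i}) of the main characteristic polynomials on the diagonal blocks and off-diagonal blocks δ_{ij}(H) M_{ij} where the first row of M_{ij} is jᵀ W_{G_j} and all other rows are zero. Then every eigenvalue of W̃ is an eigenvalue of A(G); more precisely, if W̃ α = ρ α with α = (α_1,…,α_p), then the vector v with blocks v_i = W_{G_i} α_i satisfies A(G) v = ρ v. -/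
open Matrix

section Aux


open scoped InnerProductSpace

open Polynomial in
lemma annihilate_aux {m : ℕ} (A : Matrix (Fin m) (Fin m) ℝ) (hA : A.IsHermitian)
    (S : Finset ℝ) (hS : ∀ μ, A.IsMainEig μ → μ ∈ S) :
    (aeval A.mulVecLin (∏ μ ∈ S, (X - C μ))) (fun _ => (1:ℝ)) = 0 := by
  classical
  set P := ∏ μ ∈ S, (X - C μ) with hP
  set b := hA.eigenvectorBasis with hb
  let o : EuclideanSpace ℝ (Fin m) := WithLp.toLp 2 (fun _ => (1:ℝ))
  have hrepr : ∑ j, ⟪b j, o⟫_ℝ • b j = o := b.sum_repr' o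
  have hco : (fun _ => (1:ℝ) : Fin m → ℝ) = ∑ j, ⟪b j, o⟫_ℝ • ⇑(b j) := by
    have h := congrArg WithLp.ofLp hrepr.symm
    simpa [o] using h
  have heig : ∀ j, A.mulVecLin ⇑(b j) = hA.eigenvalues j • ⇑(b j) := by
    intro j
    simpa [mulVecLin_apply] using hA.mulVec_eigenvectorBasis j
  have hbne : ∀ j, ⇑(b j) ≠ (0 : Fin m → ℝ) := by
    intro j h
    exact b.orthonormal.ne_zero j (by simpa using congrArg (WithLp.toLp 2) h)
  have key : ∀ j, (aeval A.mulVecLin P) ⇑(b j) = P.eval (hA.eigenvalues j) • ⇑(b j) := by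
    intro j
    exact Module.End.aeval_apply_of_hasEigenvector
      ⟨by rw [Module.End.mem_eigenspace_iff, heig], hbne j⟩
  rw [hco, map_sum]
  refine Finset.sum_eq_zero fun j _ => ?_
  rw [_root_.map_smul, key]
  rcases eq_or_ne (⟪b j, o⟫_ℝ) 0 with h | h
  · rw [h, zero_smul]
  · have hmain : A.IsMainEig (hA.eigenvalues j) := by
      refine ⟨⇑(b j), by simpa [mulVecLin_apply] using heig j, ?_⟩
      have h2 : ⟪b j, o⟫_ℝ = ⇑(b j) ⬝ᵥ (fun _ => (1:ℝ)) := by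
        simp [PiLp.inner_apply, dotProduct, o]
      rw [← h2]; exact h
    have : P.eval (hA.eigenvalues j) = 0 := by
      rw [hP, eval_prod]
      exact Finset.prod_eq_zero (hS _ hmain) (by simp)
    rw [this, zero_smul, smul_zero]

lemma pow_apply_aux {m : ℕ} (A : Matrix (Fin m) (Fin m) ℝ) (k : ℕ) (x : Fin m → ℝ) :
    (A.mulVecLin ^ k) x = (A ^ k) *ᵥ x := by
  induction k generalizing x with
  | zero => simp
  | succ k ih =>
    rw [pow_succ, Module.End.mul_apply, mulVecLin_apply, ih, mulVec_mulVec, ← pow_succ]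

open Polynomial in
lemma walk_recur_aux {m s : ℕ} (A : Matrix (Fin m) (Fin m) ℝ) (hA : A.IsHermitian)
    (S : Finset ℝ) (hS : ∀ μ, A.IsMainEig μ → μ ∈ S) (c : Fin s → ℝ)
    (hc : ∏ μ ∈ S, (X - C μ) = X ^ s - ∑ k : Fin s, C (c k) * X ^ (k : ℕ)) :
    (A ^ s) *ᵥ (fun _ => (1:ℝ)) =
      ∑ k : Fin s, c k • ((A ^ (k : ℕ)) *ᵥ (fun _ => (1:ℝ))) := by
  have h := annihilate_aux A hA S hS
  rw [hc] at h
  rw [map_sub, map_sum] at h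
  simp only [LinearMap.sub_apply, LinearMap.sum_apply, map_pow, aeval_X, _root_.map_mul, aeval_C,
    Module.End.mul_apply, Module.algebraMap_end_apply, pow_apply_aux, sub_eq_zero] at h
  exact h

lemma shift_sum_aux {s : ℕ} (hs : 0 < s) (β : Fin s → ℝ) (g : ℕ → ℝ) :
    ∑ k : Fin s, β k * g ((k : ℕ) + 1) =
      β ⟨s - 1, Nat.sub_lt hs one_pos⟩ * g s +
      ∑ k : Fin s, (if 1 ≤ (k : ℕ) then
        β ⟨(k : ℕ) - 1, lt_of_le_of_lt (Nat.sub_le _ _) k.2⟩ * g (k : ℕ) else 0) := by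
  classical
  set b : ℕ → ℝ := fun k => if h : k < s then β ⟨k, h⟩ else 0 with hbdef
  set F : ℕ → ℝ := fun k => if 1 ≤ k then b (k - 1) * g k else 0 with hFdef
  have hF1 : ∀ k, F (k + 1) = b k * g (k + 1) := by
    intro k; simp [hFdef]
  have hL : ∑ k : Fin s, β k * g ((k : ℕ) + 1) = ∑ k ∈ Finset.range s, F (k + 1) := by
    rw [← Fin.sum_univ_eq_sum_range (fun k => F (k + 1)) s]
    refine Finset.sum_congr rfl fun k _ => ?_
    rw [hF1]
    simp [hbdef, k.2]
  have hR : ∑ k : Fin s, (if 1 ≤ (k : ℕ) then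
      β ⟨(k : ℕ) - 1, lt_of_le_of_lt (Nat.sub_le _ _) k.2⟩ * g (k : ℕ) else 0)
      = ∑ k ∈ Finset.range s, F k := by
    rw [← Fin.sum_univ_eq_sum_range F s]
    refine Finset.sum_congr rfl fun k _ => ?_
    by_cases h : 1 ≤ (k : ℕ)
    · simp only [hFdef, if_pos h]
      have hlt : (k : ℕ) - 1 < s := lt_of_le_of_lt (Nat.sub_le _ _) k.2
      simp [hbdef, hlt]
    · simp [hFdef, h]
  have hsplit : ∑ k ∈ Finset.range (s + 1), F k = ∑ k ∈ Finset.range s, F (k + 1) + F 0 :=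
    Finset.sum_range_succ' F s
  have hsplit2 : ∑ k ∈ Finset.range (s + 1), F k = ∑ k ∈ Finset.range s, F k + F s :=
    Finset.sum_range_succ F s
  have hF0 : F 0 = 0 := by simp [hFdef]
  have hFs : F s = β ⟨s - 1, Nat.sub_lt hs one_pos⟩ * g s := by
    have hlt : s - 1 < s := Nat.sub_lt hs one_pos
    show (if 1 ≤ s then b (s - 1) * g s else 0) = _
    rw [if_pos (Nat.one_le_iff_ne_zero.2 (Nat.pos_iff_ne_zero.1 hs)), show b (s - 1) = β ⟨s - 1, Nat.sub_lt hs one_pos⟩ from by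
      show (if h : s - 1 < s then β ⟨s - 1, h⟩ else 0) = _
      rw [dif_pos hlt]]
  rw [hL, hR]
  calc ∑ k ∈ Finset.range s, F (k + 1)
      = ∑ k ∈ Finset.range s, F (k + 1) + F 0 := by rw [hF0, add_zero]
    _ = ∑ k ∈ Finset.range (s + 1), F k := hsplit.symm
    _ = ∑ k ∈ Finset.range s, F k + F s := hsplit2
    _ = β ⟨s - 1, Nat.sub_lt hs one_pos⟩ * g s + ∑ k ∈ Finset.range s, F k := by
        rw [hFs, add_comm]

end Aux

open Polynomial in
/-- Every eigenvalue of the `H`-join associated matrix `W̃` is an eigenvalue of the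
adjacency matrix of the `H`-join: if `W̃ α = ρ α` with `α = (α_1, …, α_p)`, then the
vector `v` with blocks `v_i = W_{G_i} α_i` satisfies `A(G) v = ρ v`. -/
theorem hJoin_assocMatrix_eigenvalues {p : ℕ} (H : SimpleGraph (Fin p))
    [DecidableRel H.Adj] (n : Fin p → ℕ) (G : ∀ i, SimpleGraph (Fin (n i)))
    [∀ i, DecidableRel (G i).Adj]
    -- `s i` is the number of distinct main eigenvalues of `G i`
    (s : Fin p → ℕ) (hs : ∀ i, s i = {μ : ℝ | ((G i).adjMatrix ℝ).IsMainEig μ}.ncard)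
    -- `Wmat i` is the walk matrix of `G i`, of full column rank
    (Wmat : ∀ i, Matrix (Fin (n i)) (Fin (s i)) ℝ)
    (hWmat : ∀ i a k, Wmat i a k = (((G i).adjMatrix ℝ ^ (k : ℕ)) *ᵥ fun _ => (1 : ℝ)) a)
    (hrank : ∀ i, (Wmat i).rank = s i)
    -- `c i` lists the coefficients of the main characteristic polynomial of `G i`
    (S : Fin p → Finset ℝ) (hS : ∀ i μ, μ ∈ S i ↔ ((G i).adjMatrix ℝ).IsMainEig μ)
    (c : ∀ i, Fin (s i) → ℝ)
    (hc : ∀ i, ∏ μ ∈ S i, (X - C μ) =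
      X ^ (s i) - ∑ k : Fin (s i), C (c i k) * X ^ (k : ℕ))
    -- `Wt` is the `H`-join associated matrix `W̃`
    (Wt : Matrix ((i : Fin p) × Fin (s i)) ((i : Fin p) × Fin (s i)) ℝ)
    (hWt : ∀ x y, Wt x y =
      if x.1 = y.1 then
        -- companion matrix `C(m_{G_{x.1}})`
        (if (y.2 : ℕ) = s x.1 - 1 then c x.1 x.2
         else if (x.2 : ℕ) = (y.2 : ℕ) + 1 then 1 else 0)
      else if H.Adj x.1 y.1 then
        -- `M_{x.1, y.1}`: first row `jᵀ W_{G_{y.1}}`, zeros elsewhere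
        (if (x.2 : ℕ) = 0 then ∑ a, Wmat y.1 a y.2 else 0)
      else 0) :
    (∀ ρ : ℝ, Module.End.HasEigenvalue Wt.mulVecLin ρ →
        Module.End.HasEigenvalue ((H.hJoin n G).adjMatrix ℝ).mulVecLin ρ) ∧
    (∀ (ρ : ℝ) (α : ((i : Fin p) × Fin (s i)) → ℝ), Wt *ᵥ α = ρ • α →
      (H.hJoin n G).adjMatrix ℝ *ᵥ (fun x => ∑ k : Fin (s x.1), Wmat x.1 x.2 k * α ⟨x.1, k⟩)
        = ρ • (fun x => ∑ k : Fin (s x.1), Wmat x.1 x.2 k * α ⟨x.1, k⟩)) := by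
  classical
  have hA : ∀ i, ((G i).adjMatrix ℝ).IsHermitian := by
    intro i
    ext a b
    simp [Matrix.conjTranspose_apply, SimpleGraph.adj_comm]
  have hMainS : ∀ i μ, ((G i).adjMatrix ℝ).IsMainEig μ → μ ∈ S i := fun i μ h => (hS i μ).2 h
  have hrec : ∀ i, ((G i).adjMatrix ℝ ^ (s i)) *ᵥ (fun _ => (1:ℝ)) =
      ∑ k : Fin (s i), c i k • (((G i).adjMatrix ℝ ^ (k:ℕ)) *ᵥ (fun _ => (1:ℝ))) :=
    fun i => walk_recur_aux _ (hA i) (S i) (hMainS i) (c i) (hc i)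
  have hspos : ∀ i, 0 < n i → 0 < s i := by
    intro i hni
    rcases Nat.eq_zero_or_pos (s i) with h0 | h
    swap
    · exact h
    exfalso
    have hscard : (S i).card = 0 := by
      have h1 : {μ : ℝ | ((G i).adjMatrix ℝ).IsMainEig μ} = ↑(S i) := by
        ext μ; simpa using (hS i μ).symm
      have h2 := hs i
      rw [h1, Set.ncard_coe_finset] at h2
      omega
    have hSe : S i = ∅ := Finset.card_eq_zero.1 hscard
    have h3 := annihilate_aux _ (hA i) (S i) (hMainS i)
    rw [hSe] at h3
    simp only [Finset.prod_empty, _root_.map_one, Module.End.one_apply] at h3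
    exact one_ne_zero (congrFun h3 ⟨0, hni⟩)
  have part2 : ∀ (ρ : ℝ) (α : ((i : Fin p) × Fin (s i)) → ℝ), Wt *ᵥ α = ρ • α →
      (H.hJoin n G).adjMatrix ℝ *ᵥ (fun x => ∑ k : Fin (s x.1), Wmat x.1 x.2 k * α ⟨x.1, k⟩)
        = ρ • (fun x => ∑ k : Fin (s x.1), Wmat x.1 x.2 k * α ⟨x.1, k⟩) := by
    intro ρ α hα
    funext x
    obtain ⟨i, a⟩ := x
    have hsi : 0 < s i := hspos i a.pos
    set v : ((j : Fin p) × Fin (n j)) → ℝ :=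
      fun x => ∑ k : Fin (s x.1), Wmat x.1 x.2 k * α ⟨x.1, k⟩ with hvdef
    set Ai := (G i).adjMatrix ℝ with hAidef
    set w : ℕ → Fin (n i) → ℝ := fun k => (Ai ^ k) *ᵥ (fun _ => (1:ℝ)) with hwdef
    set B : ℝ := ∑ j ∈ Finset.univ.erase i, (if H.Adj i j then (1:ℝ) else 0) *
        (∑ l : Fin (s j), (∑ b, Wmat j b l) * α ⟨j, l⟩) with hBdef
    set last : Fin (s i) := ⟨s i - 1, Nat.sub_lt hsi one_pos⟩ with hlast
    have hlastval : (last : ℕ) = s i - 1 := rfl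
    -- adjacency entries of the H-join
    have hadj_ne : ∀ (j) (b : Fin (n j)), i ≠ j →
        ((H.hJoin n G).adjMatrix ℝ) ⟨i,a⟩ ⟨j,b⟩ = (if H.Adj i j then 1 else 0) := by
      intro j b hij
      rw [SimpleGraph.adjMatrix_apply]
      have hiff : (H.hJoin n G).Adj ⟨i,a⟩ ⟨j,b⟩ ↔ H.Adj i j := by
        show (if h : i = j then ((G i).Adj a (Fin.cast (congrArg n h.symm) b)) else H.Adj i j) ↔ _
        rw [dif_neg hij]
      exact if_congr hiff rfl rfl
    have hadj_eq : ∀ b : Fin (n i),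
        ((H.hJoin n G).adjMatrix ℝ) ⟨i,a⟩ ⟨i,b⟩ = Ai a b := by
      intro b
      rw [SimpleGraph.adjMatrix_apply, hAidef, SimpleGraph.adjMatrix_apply]
      have hiff : (H.hJoin n G).Adj ⟨i,a⟩ ⟨i,b⟩ ↔ (G i).Adj a b := by
        show (if h : i = i then ((G i).Adj a (Fin.cast (congrArg n h.symm) b)) else H.Adj i i) ↔ _
        rw [dif_pos rfl]
        exact Iff.rfl
      exact if_congr hiff rfl rfl
    -- the eigen-equation, row by row
    have heq : ∀ k : Fin (s i), ρ * α ⟨i,k⟩ =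
        (if (k:ℕ) = 0 then B else 0) + (c i k * α ⟨i, last⟩ +
          (if 1 ≤ (k:ℕ) then α ⟨i, ⟨(k:ℕ)-1, lt_of_le_of_lt (Nat.sub_le _ _) k.2⟩⟩ else 0)) := by
      intro k
      have h1 : ∑ y, Wt ⟨i,k⟩ y * α y = ρ * α ⟨i,k⟩ := congrFun hα ⟨i, k⟩
      rw [← h1, ← Finset.univ_sigma_univ, Finset.sum_sigma,
        ← Finset.sum_erase_add _ _ (Finset.mem_univ i)]
      congr 1
      · -- off-diagonal part
        by_cases hk : (k:ℕ) = 0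
        · rw [if_pos hk, hBdef]
          refine Finset.sum_congr rfl fun j hj => ?_
          have hij : i ≠ j := fun he => (Finset.mem_erase.1 hj).1 he.symm
          calc ∑ l, Wt ⟨i,k⟩ ⟨j,l⟩ * α ⟨j,l⟩
              = ∑ l, (if H.Adj i j then (∑ b, Wmat j b l) else 0) * α ⟨j,l⟩ := by
                refine Finset.sum_congr rfl fun l _ => ?_
                rw [hWt]
                simp [hij, hk]
            _ = (if H.Adj i j then (1:ℝ) else 0) *
                  ∑ l : Fin (s j), (∑ b, Wmat j b l) * α ⟨j, l⟩ := by
                by_cases hadj : H.Adj i j <;> simp [hadj]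
        · rw [if_neg hk]
          refine Finset.sum_eq_zero fun j hj => Finset.sum_eq_zero fun l _ => ?_
          have hij : i ≠ j := fun he => (Finset.mem_erase.1 hj).1 he.symm
          rw [hWt]
          simp [hij, hk]
      · -- diagonal (companion) part
        have hterm : ∀ l : Fin (s i), Wt ⟨i,k⟩ ⟨i,l⟩ * α ⟨i,l⟩ =
            (if l = last then c i k * α ⟨i,l⟩ else 0) +
            (if ((k:ℕ) = (l:ℕ)+1 ∧ l ≠ last) then α ⟨i,l⟩ else 0) := by
          intro l
          rw [hWt]
          by_cases h1 : (l:ℕ) = s i - 1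
          · have hl : l = last := Fin.val_injective (by rw [hlastval, h1])
            have hkl : ¬ ((k:ℕ) = (l:ℕ)+1 ∧ l ≠ last) := fun hcon => hcon.2 hl
            simp [h1, hl, hkl, hlastval]
          · have hl : l ≠ last := fun he => h1 (by rw [he, hlastval])
            by_cases h2 : (k:ℕ) = (l:ℕ)+1 <;> simp [h1, hl, h2]
        rw [Finset.sum_congr rfl fun l _ => hterm l, Finset.sum_add_distrib]
        congr 1
        · simp
        · by_cases hk : 1 ≤ (k:ℕ)
          · rw [if_pos hk]
            set kp : Fin (s i) := ⟨(k:ℕ)-1, lt_of_le_of_lt (Nat.sub_le _ _) k.2⟩ with hkp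
            have hkpval : (kp : ℕ) = (k:ℕ) - 1 := rfl
            rw [Finset.sum_eq_single kp ?_ ?_]
            · have hc1 : (k:ℕ) = (kp:ℕ)+1 := by rw [hkpval]; omega
              have hc2 : kp ≠ last := by
                intro he
                have h3 := congrArg Fin.val he
                rw [hkpval, hlastval] at h3
                have hk2 : (k:ℕ) < s i := k.2
                omega
              rw [if_pos ⟨hc1, hc2⟩]
            · intro l _ hlkp
              refine if_neg ?_
              rintro ⟨hl1, -⟩
              refine hlkp (Fin.val_injective ?_)
              rw [hkpval]; omega
            · intro h; exact absurd (Finset.mem_univ kp) h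
          · rw [if_neg hk]
            refine Finset.sum_eq_zero fun l _ => if_neg ?_
            rintro ⟨hl1, -⟩
            omega
    -- relating Wmat to w
    have hWw : ∀ (b : Fin (n i)) (k : Fin (s i)), Wmat i b k = w (k:ℕ) b := by
      intro b k
      rw [hWmat i b k]
    -- main computation
    show ∑ y, ((H.hJoin n G).adjMatrix ℝ) ⟨i,a⟩ y * v y = ρ * v ⟨i,a⟩
    rw [← Finset.univ_sigma_univ, Finset.sum_sigma,
      ← Finset.sum_erase_add _ _ (Finset.mem_univ i)]
    have hoff : ∑ j ∈ Finset.univ.erase i,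
        ∑ b, ((H.hJoin n G).adjMatrix ℝ) ⟨i,a⟩ ⟨j,b⟩ * v ⟨j,b⟩ = B := by
      rw [hBdef]
      refine Finset.sum_congr rfl fun j hj => ?_
      have hij : i ≠ j := fun he => (Finset.mem_erase.1 hj).1 he.symm
      calc ∑ b, ((H.hJoin n G).adjMatrix ℝ) ⟨i,a⟩ ⟨j,b⟩ * v ⟨j,b⟩
          = ∑ b, (if H.Adj i j then (1:ℝ) else 0) * v ⟨j,b⟩ := by
            refine Finset.sum_congr rfl fun b _ => ?_
            rw [hadj_ne j b hij]
        _ = (if H.Adj i j then (1:ℝ) else 0) * ∑ b, v ⟨j,b⟩ := by rw [Finset.mul_sum]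
        _ = _ := by
            congr 1
            simp only [hvdef]
            refine (Finset.sum_comm : _ = ∑ l : Fin (s j), ∑ b : Fin (n j), Wmat j b l * α ⟨j, l⟩).trans ?_
            exact Finset.sum_congr rfl fun l _ => (Finset.sum_mul _ _ _).symm
    have hdiag : ∑ b, ((H.hJoin n G).adjMatrix ℝ) ⟨i,a⟩ ⟨i,b⟩ * v ⟨i,b⟩
        = ∑ k : Fin (s i), w ((k:ℕ)+1) a * α ⟨i,k⟩ := by
      calc ∑ b, ((H.hJoin n G).adjMatrix ℝ) ⟨i,a⟩ ⟨i,b⟩ * v ⟨i,b⟩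
          = ∑ b, Ai a b * ∑ k : Fin (s i), Wmat i b k * α ⟨i,k⟩ := by
            refine Finset.sum_congr rfl fun b _ => ?_
            rw [hadj_eq b]
        _ = ∑ b, ∑ k : Fin (s i), Ai a b * (Wmat i b k * α ⟨i,k⟩) := by
            refine Finset.sum_congr rfl fun b _ => Finset.mul_sum _ _ _
        _ = ∑ k : Fin (s i), ∑ b, Ai a b * (Wmat i b k * α ⟨i,k⟩) := Finset.sum_comm
        _ = ∑ k : Fin (s i), (∑ b, Ai a b * Wmat i b k) * α ⟨i,k⟩ := by
            refine Finset.sum_congr rfl fun k _ => ?_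
            rw [Finset.sum_mul]
            exact Finset.sum_congr rfl fun b _ => (mul_assoc _ _ _).symm
        _ = _ := by
            refine Finset.sum_congr rfl fun k _ => ?_
            congr 1
            calc ∑ b, Ai a b * Wmat i b k
                = ∑ b, Ai a b * w (k:ℕ) b := by
                  refine Finset.sum_congr rfl fun b _ => ?_
                  rw [hWw]
              _ = (Ai *ᵥ w (k:ℕ)) a := rfl
              _ = w ((k:ℕ)+1) a := by
                  simp only [hwdef]
                  rw [mulVec_mulVec, ← pow_succ']
    rw [hoff, hdiag]
    -- right hand side
    have hrecA : w (s i) a = ∑ k : Fin (s i), c i k * w (k:ℕ) a := by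
      simp only [hwdef]
      have h := congrFun (hrec i) a
      simpa using h
    have hRHS : ρ * v ⟨i,a⟩ = B + (α ⟨i, last⟩ * w (s i) a +
        ∑ k : Fin (s i), (if 1 ≤ (k:ℕ) then
          α ⟨i, ⟨(k:ℕ)-1, lt_of_le_of_lt (Nat.sub_le _ _) k.2⟩⟩ * w (k:ℕ) a else 0)) := by
      have e1 : ρ * v ⟨i,a⟩ = ∑ k : Fin (s i), w (k:ℕ) a * (ρ * α ⟨i,k⟩) := by
        simp only [hvdef]
        rw [Finset.mul_sum]
        refine Finset.sum_congr rfl fun k _ => ?_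
        rw [hWw]
        ring
      rw [e1]
      have e2 : ∀ k : Fin (s i), w (k:ℕ) a * (ρ * α ⟨i,k⟩) =
          (if (k:ℕ) = 0 then w (k:ℕ) a * B else 0) +
          (c i k * w (k:ℕ) a * α ⟨i, last⟩ +
           (if 1 ≤ (k:ℕ) then
             α ⟨i, ⟨(k:ℕ)-1, lt_of_le_of_lt (Nat.sub_le _ _) k.2⟩⟩ * w (k:ℕ) a else 0)) := by
        intro k
        rw [heq k]
        by_cases hk : (k:ℕ) = 0
        · have hk1 : ¬ (1 ≤ (k:ℕ)) := by omega
          rw [if_pos hk, if_pos hk, if_neg hk1, if_neg hk1]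
          ring
        · have hk1 : 1 ≤ (k:ℕ) := by omega
          rw [if_neg hk, if_neg hk, if_pos hk1, if_pos hk1]
          ring
      rw [Finset.sum_congr rfl fun k _ => e2 k, Finset.sum_add_distrib, Finset.sum_add_distrib]
      congr 1
      · -- the B term
        rw [Finset.sum_eq_single (⟨0, hsi⟩ : Fin (s i)) ?_ ?_]
        · rw [if_pos rfl]
          have : w 0 a = 1 := by
            simp only [hwdef]
            simp
          rw [this, one_mul]
        · intro l _ hl
          refine if_neg fun h0 => hl (Fin.val_injective h0)
        · intro h; exact absurd (Finset.mem_univ _) h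
      · congr 1
        rw [hrecA, Finset.mul_sum]
        refine Finset.sum_congr rfl fun k _ => ?_
        ring
    rw [hRHS]
    have hshift := shift_sum_aux hsi (fun k => α ⟨i,k⟩) (fun m => w m a)
    have hL2 : ∑ k : Fin (s i), w ((k:ℕ)+1) a * α ⟨i,k⟩ =
        α ⟨i, last⟩ * w (s i) a +
        ∑ k : Fin (s i), (if 1 ≤ (k:ℕ) then
          α ⟨i, ⟨(k:ℕ)-1, lt_of_le_of_lt (Nat.sub_le _ _) k.2⟩⟩ * w (k:ℕ) a else 0) := by
      calc ∑ k : Fin (s i), w ((k:ℕ)+1) a * α ⟨i,k⟩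
          = ∑ k : Fin (s i), α ⟨i,k⟩ * w ((k:ℕ)+1) a :=
            Finset.sum_congr rfl fun k _ => mul_comm _ _
        _ = _ := hshift
    rw [hL2]
  refine ⟨?_, part2⟩
  intro ρ hρ
  obtain ⟨α, hαmem, hαne⟩ := hρ.exists_hasEigenvector
  have hαeq : Wt *ᵥ α = ρ • α := by
    have := Module.End.mem_eigenspace_iff.1 hαmem
    rwa [mulVecLin_apply] at this
  have h2 := part2 ρ α hαeq
  set v : ((j : Fin p) × Fin (n j)) → ℝ :=
    fun x => ∑ k : Fin (s x.1), Wmat x.1 x.2 k * α ⟨x.1, k⟩ with hvdef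
  have hvne : v ≠ 0 := by
    intro hv0
    apply hαne
    funext x
    obtain ⟨i, k⟩ := x
    -- the walk matrix has full column rank, hence is injective
    have hker : LinearMap.ker (Wmat i).mulVecLin = ⊥ := by
      have h3 := (Wmat i).mulVecLin.finrank_range_add_finrank_ker
      rw [show Module.finrank ℝ (LinearMap.range (Wmat i).mulVecLin) = s i from hrank i] at h3
      simp only [Module.finrank_pi, Fintype.card_fin] at h3
      have h4 : Module.finrank ℝ (LinearMap.ker (Wmat i).mulVecLin) = 0 := by omega
      exact Submodule.finrank_eq_zero.1 h4
    have hmem : (fun k => α ⟨i, k⟩) ∈ LinearMap.ker (Wmat i).mulVecLin := by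
      rw [LinearMap.mem_ker, mulVecLin_apply]
      funext b
      have := congrFun hv0 ⟨i, b⟩
      simpa [hvdef, mulVec, dotProduct] using this
    rw [hker, Submodule.mem_bot] at hmem
    exact congrFun hmem k
  refine Module.End.hasEigenvalue_of_hasEigenvector (x := v) ⟨?_, hvne⟩
  rw [Module.End.mem_eigenspace_iff, mulVecLin_apply]
  exact h2
end
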